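/- Let T be large, let 2 ≤ x ≤ T, and let k be a natural number such that x^k ≤ T/log T. For any complex numbers a(p) indexed by primes p, ∫_T^{2T} |Σ_{p ≤ x} a(p)·p^{−(1/2+it)}|^{2k} dt ≪ k! · T · (Σ_{p ≤ x} |a(p)|²/p)^k, where the sums are over primes p and the implied constant is absolute. -/

import Mathlib

open Complex Real Filter MeasureTheory
open scoped Classical

/-- The multiplicity of `z` as a zero of `f` (0 if `f` is not analytic at `z`). -/
noncomputable def zeroMult (f : ℂ → ℂ) (z : ℂ) : ℕ :=
  if h : AnalyticAt ℂ f z then (analyticOrderAt f z).toNat else 0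

/-- The logarithmic derivative `ζ'/ζ` of the Riemann zeta function. -/
noncomputable def zetaLogDeriv (s : ℂ) : ℂ := deriv riemannZeta s / riemannZeta s

/-- `γ` enumerates, with multiplicity and in nondecreasing order, the ordinates of the
nontrivial zeros of the Riemann zeta function in the upper half-plane (on RH these are
exactly the zeros `1/2 + iγ` with `γ > 0`). -/
def IsZetaZeroSeq (γ : ℕ → ℝ) : Prop :=
  Monotone γ ∧
  (∀ n, 0 < γ n ∧ riemannZeta (1 / 2 + γ n * Complex.I) = 0) ∧
  (∀ t : ℝ, 0 < t → riemannZeta (1 / 2 + t * Complex.I) = 0 →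
    Nat.card {n | γ n = t} = zeroMult riemannZeta (1 / 2 + t * Complex.I))

/-- `B`, `G` enumerate, with multiplicity and in nondecreasing order of imaginary part,
the zeros `β' + iγ'` of `ζ'` with imaginary part at least `10`. -/
def IsZetaDerivZeroSeq (B G : ℕ → ℝ) : Prop :=
  Monotone G ∧
  (∀ j, 10 ≤ G j ∧ deriv riemannZeta (B j + G j * Complex.I) = 0) ∧
  (∀ s : ℂ, 10 ≤ s.im → deriv riemannZeta s = 0 →
    Nat.card {j | (B j : ℂ) + G j * Complex.I = s} = zeroMult (deriv riemannZeta) s)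

/-- `N(t)`: the number of zeros of `ζ` with `0 < Im s < t`, counted with multiplicity. -/
noncomputable def zetaN (t : ℝ) : ℝ :=
  ∑' s : {s : ℂ | riemannZeta s = 0 ∧ 0 < s.im ∧ s.im < t},
    (zeroMult riemannZeta s : ℝ)

/-- `N(γ, l₁, l₂)` from the paper. -/
noncomputable def zetaNgap (Cstar : ℝ) (γ : ℝ) (l₁ l₂ : ℤ) : ℝ :=
  zetaN (γ + l₂ * Cstar * Real.log (Real.log γ) / Real.log γ)
    - zetaN (γ + l₁ * Cstar * Real.log (Real.log γ) / Real.log γ)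
    - (l₂ - l₁) * Cstar * Real.log (Real.log γ) / (2 * π)

/-- `γ n` is the ordinate of a zero of `ζ` closest to `ρ'` (among the zeros `1/2 + iγ m`),
with ties broken by taking the zero nearer to the origin. -/
def IsNearestZetaZeroOrdinate (γ : ℕ → ℝ) (ρ' : ℂ) (n : ℕ) : Prop :=
  (∀ m, ‖ρ' - (1 / 2 + γ n * Complex.I)‖ ≤ ‖ρ' - (1 / 2 + γ m * Complex.I)‖) ∧
  (∀ m, ‖ρ' - (1 / 2 + γ m * Complex.I)‖ = ‖ρ' - (1 / 2 + γ n * Complex.I)‖ → γ n ≤ γ m)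

/-- Condition (i): the gaps `γ_{n+m} - γ_{n+m-1}` for `0 < |m| ≤ 4 C* ⌊log log T⌋`
are all at least `ε / (2 log γ_n)` (indices are 0-based). -/
def WellSpacedAt (γ : ℕ → ℝ) (ε Cstar T : ℝ) (n : ℕ) : Prop :=
  ∀ m : ℤ, m ≠ 0 → (m.natAbs : ℝ) ≤ 4 * Cstar * (⌊Real.log (Real.log T)⌋ : ℝ) →
    1 ≤ (n : ℤ) + m →
    γ ((n : ℤ) + m).toNat - γ ((n : ℤ) + m - 1).toNat ≥ ε / (2 * Real.log (γ n))

/-- Condition (ii): `N(γc, l₁, l₂) ≤ C log log T` for all admissible `l₁ < l₂`. -/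
def NgapBoundedAt (Cstar C T γc : ℝ) : Prop :=
  ∀ l₁ l₂ : ℤ, l₁ < l₂ →
    (l₁.natAbs : ℝ) ≤ Real.log T / (Cstar * Real.log (Real.log T)) →
    (l₂.natAbs : ℝ) ≤ Real.log T / (Cstar * Real.log (Real.log T)) →
    zetaNgap Cstar γc l₁ l₂ ≤ C * Real.log (Real.log T)

/-- `M_{γ_c}` from the paper: the sum of `1/(γ - γ')` over ordinates `γ` of zeros of `ζ`
(with multiplicity) with `0 < |γ - γ_c| ≤ C* log log γ_c / log γ_c`. -/
noncomputable def Mgamma (γ : ℕ → ℝ) (Cstar γc γ' : ℝ) : ℝ :=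
  ∑' n : {n : ℕ | 0 < |γ n - γc| ∧
      |γ n - γc| ≤ Cstar * Real.log (Real.log γc) / Real.log γc},
    1 / (γ (n : ℕ) - γ')

private lemma exists_comp_perm7 {k : ℕ} {f g : Fin k → ℕ}
    (h : (List.ofFn f).Perm (List.ofFn g)) : ∃ σ : Equiv.Perm (Fin k), f = g ∘ σ := by
  have h1 : (List.ofFn (f ∘ Tuple.sort f)).Perm (List.ofFn (g ∘ Tuple.sort g)) :=
    ((Equiv.Perm.ofFn_comp_perm (Tuple.sort f) f).trans h).trans
      (Equiv.Perm.ofFn_comp_perm (Tuple.sort g) g).symm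
  have h2 : f ∘ Tuple.sort f = g ∘ Tuple.sort g :=
    List.ofFn_injective (List.Perm.eq_of_sortedLE
      (List.sortedLE_ofFn_iff.mpr (Tuple.monotone_sort f))
      (List.sortedLE_ofFn_iff.mpr (Tuple.monotone_sort g)) h1)
  refine ⟨((Tuple.sort f).symm).trans (Tuple.sort g), ?_⟩
  funext i
  have h3 := congrFun h2 ((Tuple.sort f).symm i)
  simpa using h3

private lemma card_fiber_le7 (k : ℕ) (P : Finset ℕ) (hP : ∀ p ∈ P, Nat.Prime p) (n : ℕ) :
    ((Fintype.piFinset fun _ : Fin k => P).filter fun h => ∏ i, h i = n).card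
      ≤ k.factorial := by
  set F := ((Fintype.piFinset fun _ : Fin k => P).filter fun h => ∏ i, h i = n) with hF
  rcases F.eq_empty_or_nonempty with he | ⟨g₀, hg₀⟩
  · simp [he]
  have hmem : ∀ f ∈ F, (∀ p ∈ List.ofFn f, Nat.Prime p) ∧ (List.ofFn f).prod = n := by
    intro f hf
    rw [hF, Finset.mem_filter, Fintype.mem_piFinset] at hf
    constructor
    · intro p hp
      rw [List.mem_ofFn] at hp
      obtain ⟨i, rfl⟩ := hp
      exact hP _ (hf.1 i)
    · rw [List.prod_ofFn]; exact hf.2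
  have key : ∀ h ∈ F, ∃ σ : Equiv.Perm (Fin k), h = g₀ ∘ σ := by
    intro h hh
    apply exists_comp_perm7
    obtain ⟨h1, h2⟩ := hmem h hh
    obtain ⟨g1, g2⟩ := hmem g₀ hg₀
    exact (Nat.primeFactorsList_unique h2 h1).trans
      (Nat.primeFactorsList_unique g2 g1).symm
  have hcard : F.card ≤ (Finset.univ : Finset (Equiv.Perm (Fin k))).card := by
    apply Finset.card_le_card_of_injOn
      (fun h => if hh : h ∈ F then (key h hh).choose else (Equiv.refl _))
    · intro h _; exact Finset.mem_univ _
    · intro h hh h' hh' heq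
      simp only [Finset.mem_coe] at hh hh'
      simp only [dif_pos hh, dif_pos hh'] at heq
      rw [(key h hh).choose_spec, (key h' hh').choose_spec, heq]
  simpa [Finset.card_univ, Fintype.card_perm, Fintype.card_fin] using hcard

private lemma cpow_eval7 (p : ℕ) (hp : 0 < p) (t : ℝ) :
    (p : ℂ) ^ (-(((1/2 : ℝ) : ℂ) + (t : ℝ) * Complex.I)) =
      (((p:ℝ) ^ (-(1/2) : ℝ) : ℝ) : ℂ) *
        Complex.exp ((((-(Real.log p)) : ℝ) : ℂ) * Complex.I * (t:ℝ)) := by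
  have hne : (p : ℂ) ≠ 0 := Nat.cast_ne_zero.mpr hp.ne'
  rw [Complex.cpow_def_of_ne_zero hne]
  have hlog : Complex.log (p : ℂ) = ((Real.log p : ℝ) : ℂ) := by
    rw [← Complex.ofReal_natCast, Complex.ofReal_log (Nat.cast_nonneg p)]
  rw [hlog, Real.rpow_def_of_pos (by exact_mod_cast hp), Complex.ofReal_exp,
    ← Complex.exp_add]
  congr 1
  push_cast
  ring

private lemma prod_cpow_eval7 {k : ℕ} (g : Fin k → ℕ) (hg : ∀ i, 0 < g i) (t : ℝ) :
    ∏ i, (g i : ℂ) ^ (-(((1/2:ℝ):ℂ) + (t:ℝ) * Complex.I)) =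
      ((((∏ i, g i : ℕ):ℝ) ^ (-(1/2) : ℝ) : ℝ) : ℂ) *
        Complex.exp ((((-(Real.log ((∏ i, g i : ℕ)))) : ℝ) : ℂ) * Complex.I * (t:ℝ)) := by
  have h1 : ∀ i ∈ (Finset.univ : Finset (Fin k)), (g i : ℂ) ^ (-(((1/2:ℝ):ℂ) + (t:ℝ) * Complex.I))
      = (((g i:ℝ) ^ (-(1/2) : ℝ) : ℝ) : ℂ) *
        Complex.exp ((((-(Real.log (g i))) : ℝ) : ℂ) * Complex.I * (t:ℝ)) :=
    fun i _ => cpow_eval7 (g i) (hg i) t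
  rw [Finset.prod_congr rfl h1, Finset.prod_mul_distrib, ← Complex.exp_sum]
  congr 1
  · rw [← Complex.ofReal_prod, Real.finset_prod_rpow _ _ (fun i _ => Nat.cast_nonneg _),
      Nat.cast_prod]
  · have : ∀ i ∈ (Finset.univ : Finset (Fin k)),
        (((-(Real.log (g i))) : ℝ) : ℂ) * Complex.I * (t:ℝ)
          = (((-(Real.log (g i))) : ℝ) : ℂ) * (Complex.I * (t:ℝ)) := fun i _ => by ring
    rw [Finset.sum_congr rfl this, ← Finset.sum_mul, mul_assoc]
    congr 1
    have hlp : Real.log ((∏ i, g i : ℕ):ℝ) = ∑ i, Real.log (g i) := by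
      rw [Nat.cast_prod]
      exact Real.log_prod (fun i _ => by exact_mod_cast (hg i).ne')
    rw [← Complex.ofReal_sum]
    norm_cast
    rw [hlp, ← Finset.sum_neg_distrib]

private lemma sum_Icc_inv_le7 (M Nn : ℕ) (h : M ≤ Nn) (hN : 1 ≤ Nn) :
    ∑ d ∈ Finset.Icc 1 M, (1/(d:ℝ)) ≤ 1 + Real.log Nn := by
  have h0 : ∑ d ∈ Finset.Icc 1 M, (1/(d:ℝ)) = (harmonic M : ℝ) := by
    rw [harmonic_eq_sum_Icc]
    push_cast
    simp [one_div]
  rw [h0]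
  refine (harmonic_le_one_add_log M).trans ?_
  rcases Nat.eq_zero_or_pos M with rfl | hM
  · simp
    exact Real.log_nonneg (by exact_mod_cast hN)
  · have : Real.log M ≤ Real.log Nn :=
      Real.log_le_log (by exact_mod_cast hM) (by exact_mod_cast h)
    linarith

private lemma sum_inv_abs_le7 (Nn m : ℕ) (hm1 : 1 ≤ m) (hmN : m ≤ Nn) :
    ∑ n ∈ (Finset.Icc 1 Nn).erase m, (1 / |(m:ℝ) - (n:ℝ)|) ≤ 2 * (1 + Real.log Nn) := by
  have hN : 1 ≤ Nn := le_trans hm1 hmN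
  have hsplit : (Finset.Icc 1 Nn).erase m = Finset.Icc 1 (m-1) ∪ Finset.Icc (m+1) Nn := by
    ext n
    simp only [Finset.mem_erase, Finset.mem_Icc, Finset.mem_union]
    omega
  have hdisj : Disjoint (Finset.Icc 1 (m-1)) (Finset.Icc (m+1) Nn) := by
    rw [Finset.disjoint_left]
    intro n hn hn'
    simp only [Finset.mem_Icc] at hn hn'
    omega
  rw [hsplit, Finset.sum_union hdisj]
  have h1 : ∑ n ∈ Finset.Icc 1 (m-1), (1 / |(m:ℝ) - (n:ℝ)|)
      = ∑ d ∈ Finset.Icc 1 (m-1), (1/(d:ℝ)) := by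
    refine Finset.sum_nbij' (i := fun n => m - n) (j := fun d => m - d) ?_ ?_ ?_ ?_ ?_
    · intro n hn; simp only [Finset.mem_Icc] at *; omega
    · intro d hd; simp only [Finset.mem_Icc] at *; omega
    · intro n hn; simp only [Finset.mem_Icc] at hn; omega
    · intro d hd; simp only [Finset.mem_Icc] at hd; omega
    · intro n hn
      simp only [Finset.mem_Icc] at hn
      have h2 : (n:ℝ) ≤ (m:ℝ) := by exact_mod_cast by omega
      rw [Nat.cast_sub (by omega), _root_.abs_of_nonneg (by linarith)]
  have h2 : ∑ n ∈ Finset.Icc (m+1) Nn, (1 / |(m:ℝ) - (n:ℝ)|)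
      = ∑ d ∈ Finset.Icc 1 (Nn - m), (1/(d:ℝ)) := by
    refine Finset.sum_nbij' (i := fun n => n - m) (j := fun d => d + m) ?_ ?_ ?_ ?_ ?_
    · intro n hn; simp only [Finset.mem_Icc] at *; omega
    · intro d hd; simp only [Finset.mem_Icc] at *; omega
    · intro n hn; simp only [Finset.mem_Icc] at hn; omega
    · intro d hd; simp only [Finset.mem_Icc] at hd; omega
    · intro n hn
      simp only [Finset.mem_Icc] at hn
      have h2 : (m:ℝ) ≤ (n:ℝ) := by exact_mod_cast by omega
      rw [Nat.cast_sub (by omega), abs_sub_comm, _root_.abs_of_nonneg (by linarith)]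
  rw [h1, h2]
  have b1 := sum_Icc_inv_le7 (m-1) Nn (by omega) hN
  have b2 := sum_Icc_inv_le7 (Nn - m) Nn (by omega) hN
  linarith

private lemma log_gap7 {m n : ℕ} (hm : 1 ≤ m) (hn : 1 ≤ n) (hne : m ≠ n) {N : ℝ}
    (hmN : (m:ℝ) ≤ N) (hnN : (n:ℝ) ≤ N) :
    |(m:ℝ) - n| / N ≤ |Real.log n - Real.log m| := by
  wlog hlt : m < n generalizing m n
  · have h := this hn hm hne.symm hnN hmN (by omega)
    rwa [abs_sub_comm ((n:ℝ)), abs_sub_comm (Real.log m)] at h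
  have hn0 : (0:ℝ) < n := by exact_mod_cast hn
  have hm0 : (0:ℝ) < m := by exact_mod_cast hm
  have hN : 0 < N := lt_of_lt_of_le hn0 hnN
  have h1 : Real.log ((m:ℝ)/n) ≤ (m:ℝ)/n - 1 := Real.log_le_sub_one_of_pos (by positivity)
  rw [Real.log_div (by positivity) (by positivity)] at h1
  have hmn : (m:ℝ) < n := by exact_mod_cast hlt
  have heq : (m:ℝ)/n - 1 = ((m:ℝ) - n)/n := by field_simp
  rw [heq] at h1
  have hlog : Real.log m ≤ Real.log n := Real.log_le_log hm0 (le_of_lt hmn)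
  rw [_root_.abs_of_nonpos (by linarith), _root_.abs_of_nonneg (by linarith)]
  have hstep : ((n:ℝ) - m)/N ≤ ((n:ℝ) - m)/n :=
    div_le_div_of_nonneg_left (by linarith) hn0 hnN
  have hng : ((n:ℝ) - m)/n = -(((m:ℝ) - n)/n) := by ring
  have h3 : ((n:ℝ) - m)/n ≤ Real.log n - Real.log m := by
    rw [hng]; linarith
  have hfin : -((m:ℝ)-n)/N = ((n:ℝ)-m)/N := by ring
  linarith

/-- **Lemma (Soundararajan).** For `T` large, `2 ≤ x ≤ T`, and a natural number `k` with
`x^k ≤ T/log T`, for any complex numbers `a(p)`,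
`∫_T^{2T} |Σ_{p ≤ x} a(p) p^{-1/2-it}|^{2k} dt ≪ k! T (Σ_{p ≤ x} |a(p)|²/p)^k`,
with an absolute implied constant. -/
theorem statement7 :
    ∃ c : ℝ, 0 < c ∧ ∃ T₀ : ℝ, ∀ T : ℝ, T₀ ≤ T → ∀ x : ℝ, 2 ≤ x → x ≤ T →
      ∀ k : ℕ, 0 < k → x ^ k ≤ T / Real.log T → ∀ a : ℕ → ℂ,
        (∫ t in Set.Ioc T (2 * T),
            ‖∑ p ∈ Finset.filter Nat.Prime (Finset.Iic ⌊x⌋₊),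
                a p * (p : ℂ) ^ (-(((1 / 2 : ℝ) : ℂ) + (t : ℝ) * Complex.I))‖ ^ (2 * k)) ≤
          c * (Nat.factorial k) * T *
            (∑ p ∈ Finset.filter Nat.Prime (Finset.Iic ⌊x⌋₊), ‖a p‖ ^ 2 / (p : ℝ)) ^ k := by
  refine ⟨9, by norm_num, 3, ?_⟩
  intro T hT x hx2 hxT k hk hxk a
  set P := Finset.filter Nat.Prime (Finset.Iic ⌊x⌋₊) with hP
  -- numerics
  have hT0 : (0:ℝ) < T := by linarith
  have hlogT : 1 ≤ Real.log T := by
    rw [Real.le_log_iff_exp_le hT0]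
    calc Real.exp 1 ≤ 2.7182818286 := Real.exp_one_lt_d9.le
    _ ≤ 3 := by norm_num
    _ ≤ T := hT
  have hlogT0 : 0 < Real.log T := by linarith
  have hx0 : (0:ℝ) < x := by linarith
  have hxk0 : (0:ℝ) < x ^ k := by positivity
  have hxkT : x ^ k * Real.log T ≤ T := by
    rw [← le_div_iff₀ hlogT0]; exact hxk
  -- prime facts
  have hPprime : ∀ p ∈ P, Nat.Prime p := fun p hp => (Finset.mem_filter.mp hp).2
  have hPle : ∀ p ∈ P, (p:ℝ) ≤ x := by
    intro p hp
    have h1 := (Finset.mem_filter.mp hp).1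
    rw [Finset.mem_Iic] at h1
    calc (p:ℝ) ≤ (⌊x⌋₊:ℝ) := by exact_mod_cast h1
    _ ≤ x := Nat.floor_le hx0.le
  have hPfloor : ∀ p ∈ P, p ≤ ⌊x⌋₊ := fun p hp =>
    Finset.mem_Iic.mp (Finset.mem_filter.mp hp).1
  have hPpos : ∀ p ∈ P, 0 < p := fun p hp => (hPprime p hp).pos
  set D := Fintype.piFinset (fun _ : Fin k => P) with hD
  set Pr : (Fin k → ℕ) → ℕ := fun g => ∏ i, g i with hPrdef
  set cc : (Fin k → ℕ) → ℂ := fun g => ∏ i, a (g i) with hccdef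
  set ρ : (Fin k → ℕ) → ℝ := fun g => ((Pr g : ℝ)) ^ (-(1/2) : ℝ) with hρdef
  set u : (Fin k → ℕ) → ℝ := fun g => ‖cc g‖ * ρ g with hudef
  have hρnn : ∀ g, 0 ≤ ρ g := fun g => Real.rpow_nonneg (Nat.cast_nonneg _) _
  have hunn : ∀ g, 0 ≤ u g := fun g => mul_nonneg (norm_nonneg _) (hρnn g)
  set w : (Fin k → ℕ) → ℝ := fun g => u g ^ 2 with hwdef
  have hwnn : ∀ g, 0 ≤ w g := fun g => sq_nonneg _
  -- membership facts
  have hDmem : ∀ g ∈ D, ∀ i, g i ∈ P := fun g hg => (Fintype.mem_piFinset.mp hg)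
  have hPr1 : ∀ g ∈ D, 1 ≤ Pr g := fun g hg =>
    Finset.one_le_prod' (fun i _ => (hPpos _ (hDmem g hg i)))
  set Nn := ⌊x⌋₊ ^ k with hNndef
  have hNn1 : 1 ≤ Nn := by
    have : 2 ≤ ⌊x⌋₊ := by
      have := Nat.le_floor (by exact_mod_cast hx2 : ((2:ℕ):ℝ) ≤ x)
      exact this
    calc 1 = 1 ^ k := (one_pow k).symm
    _ ≤ ⌊x⌋₊ ^ k := Nat.pow_le_pow_left (by omega) k
  have hPrNn : ∀ g ∈ D, Pr g ≤ Nn := by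
    intro g hg
    calc Pr g ≤ ∏ _i : Fin k, ⌊x⌋₊ :=
      Finset.prod_le_prod' (fun i _ => hPfloor _ (hDmem g hg i))
    _ = Nn := by rw [Finset.prod_const, Finset.card_univ, Fintype.card_fin]
  have hPrle : ∀ g ∈ D, (Pr g : ℝ) ≤ x ^ k := by
    intro g hg
    have hcast : (Pr g : ℝ) = ∏ i, ((g i : ℝ)) := by
      rw [hPrdef]; push_cast; rfl
    rw [hcast]
    calc ∏ i, ((g i:ℝ)) ≤ ∏ _i : Fin k, x :=
      Finset.prod_le_prod (fun i _ => Nat.cast_nonneg _) (fun i _ => hPle _ (hDmem g hg i))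
    _ = x ^ k := by rw [Finset.prod_const, Finset.card_univ, Fintype.card_fin]
  have hNnle : (Nn : ℝ) ≤ x ^ k := by
    rw [hNndef]
    push_cast
    exact pow_le_pow_left₀ (Nat.cast_nonneg _) (Nat.floor_le hx0.le) k
  -- the kernel
  set E : (Fin k → ℕ) → (Fin k → ℕ) → ℝ → ℂ := fun g h t =>
    (cc g * (starRingEnd ℂ) (cc h) * (((ρ g * ρ h : ℝ)) : ℂ)) *
      Complex.exp ((((Real.log (Pr h) - Real.log (Pr g) : ℝ)) : ℂ) * Complex.I * (t:ℝ))
    with hEdef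
  -- continuity and integrability
  have hEcont : ∀ g h, Continuous (E g h) := by
    intro g h
    apply Continuous.mul continuous_const
    exact Complex.continuous_exp.comp (Continuous.mul continuous_const Complex.continuous_ofReal)
  have hEint : ∀ g h, IntegrableOn (E g h) (Set.Ioc T (2*T)) volume :=
    fun g h => (hEcont g h).integrableOn_Ioc
  have hEreint : ∀ g h, IntegrableOn (fun t => (E g h t).re) (Set.Ioc T (2*T)) volume :=
    fun g h => (Complex.continuous_re.comp (hEcont g h)).integrableOn_Ioc
  -- Claim 1 : pointwise identity
  have claim1 : ∀ t : ℝ,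
      ‖∑ p ∈ P, a p * (p : ℂ) ^ (-(((1 / 2 : ℝ) : ℂ) + (t : ℝ) * Complex.I))‖ ^ (2 * k)
        = ∑ g ∈ D, ∑ h ∈ D, (E g h t).re := by
    intro t
    set F := ∑ p ∈ P, a p * (p : ℂ) ^ (-(((1 / 2 : ℝ) : ℂ) + (t : ℝ) * Complex.I)) with hF
    have hFk : F ^ k = ∑ g ∈ D, (cc g * ((ρ g : ℝ) : ℂ) *
        Complex.exp ((((-(Real.log (Pr g))) : ℝ) : ℂ) * Complex.I * (t:ℝ))) := by
      have h0 : F ^ k = ∏ _i : Fin k, F := by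
        rw [Finset.prod_const, Finset.card_univ, Fintype.card_fin]
      rw [h0, hF, Finset.prod_univ_sum]
      refine Finset.sum_congr rfl fun g hg => ?_
      rw [Finset.prod_mul_distrib, prod_cpow_eval7 g (fun i => hPpos _ (hDmem g hg i)) t]
      rw [hccdef, hρdef, hPrdef]
      ring
    have hnorm : ‖F‖ ^ (2 * k) = (F ^ k * (starRingEnd ℂ) (F ^ k)).re := by
      rw [Complex.mul_conj, Complex.ofReal_re, Complex.normSq_eq_norm_sq,
        norm_pow, mul_comm 2 k, pow_mul]
    rw [hnorm, hFk, map_sum, Finset.sum_mul_sum, Complex.re_sum]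
    refine Finset.sum_congr rfl fun g hg => ?_
    rw [Complex.re_sum]
    refine Finset.sum_congr rfl fun h hh => ?_
    congr 1
    rw [map_mul, map_mul, Complex.conj_ofReal, ← Complex.exp_conj]
    have hconjarg : (starRingEnd ℂ) ((((-(Real.log (Pr h))) : ℝ) : ℂ) * Complex.I * (t:ℝ))
        = (((Real.log (Pr h) : ℝ)) : ℂ) * Complex.I * (t:ℝ) := by
      simp only [map_mul, Complex.conj_ofReal, Complex.conj_I]
      push_cast
      ring
    rw [hconjarg, hEdef]
    rw [mul_mul_mul_comm, ← Complex.exp_add]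
    push_cast
    ring_nf
  -- the pair bound B
  set B : (Fin k → ℕ) → (Fin k → ℕ) → ℝ := fun g h =>
    if Pr g = Pr h then T else 2 * x^k / |(Pr g:ℝ) - (Pr h:ℝ)| with hBdef
  have hBnn : ∀ g h, 0 ≤ B g h := by
    intro g h
    rw [hBdef]
    dsimp only
    split_ifs
    · exact hT0.le
    · positivity
  have hBsymm : ∀ g h, B g h = B h g := by
    intro g h
    rw [hBdef]
    dsimp only
    rcases eq_or_ne (Pr g) (Pr h) with he | hne
    · rw [if_pos he, if_pos he.symm]
    · rw [if_neg hne, if_neg (Ne.symm hne), abs_sub_comm]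
  -- Claim 2 : the integral bound
  have claim2 : ∀ g ∈ D, ∀ h ∈ D,
      (∫ t in Set.Ioc T (2*T), E g h t).re ≤ u g * u h * B g h := by
    intro g hg h hh
    set θ : ℝ := Real.log (Pr h) - Real.log (Pr g) with hθ
    set Z : ℂ := cc g * (starRingEnd ℂ) (cc h) * (((ρ g * ρ h : ℝ)) : ℂ) with hZ
    have hZnorm : ‖Z‖ = u g * u h := by
      rw [hZ, norm_mul, norm_mul, Complex.norm_real, Real.norm_eq_abs, RCLike.norm_conj,
        _root_.abs_of_nonneg (mul_nonneg (hρnn g) (hρnn h)), hudef]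
      ring
    set c : ℂ := ((θ : ℝ) : ℂ) * Complex.I with hcdef
    have hEeq : ∀ t : ℝ, E g h t = Z * Complex.exp (c * (t:ℂ)) := fun t => rfl
    have hIeq : (∫ t in Set.Ioc T (2*T), E g h t)
        = Z * ∫ t in (T:ℝ)..(2*T), Complex.exp (c * (t:ℂ)) := by
      rw [intervalIntegral.integral_of_le (by linarith : T ≤ 2*T)]
      simp only [hEeq]
      rw [MeasureTheory.integral_const_mul]
    have hre : (∫ t in Set.Ioc T (2*T), E g h t).re
        ≤ ‖∫ t in Set.Ioc T (2*T), E g h t‖ :=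
      le_trans (le_abs_self _) (Complex.abs_re_le_norm _)
    refine hre.trans ?_
    rw [hIeq, norm_mul, hZnorm]
    rcases eq_or_ne (Pr g) (Pr h) with hpe | hpne
    · -- diagonal
      have hθ0 : θ = 0 := by rw [hθ, hpe, sub_self]
      have hc0 : c = 0 := by rw [hcdef, hθ0]; simp
      have : (∫ t in (T:ℝ)..(2*T), Complex.exp (c * (t:ℂ)))
          = ((2*T - T : ℝ) : ℂ) := by
        simp only [hc0, zero_mul, Complex.exp_zero]
        rw [intervalIntegral.integral_const]
        simp
      rw [this, hBdef]
      simp only [if_pos hpe]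
      rw [Complex.norm_real, Real.norm_eq_abs]
      rw [_root_.abs_of_nonneg (by linarith : (0:ℝ) ≤ 2*T - T)]
      have : 2*T - T = T := by ring
      rw [this]
    · -- off-diagonal
      have hm1 : 1 ≤ Pr g := hPr1 g hg
      have hn1 : 1 ≤ Pr h := hPr1 h hh
      have hθne : θ ≠ 0 := by
        intro h0
        rw [hθ, sub_eq_zero] at h0
        have : ((Pr h : ℝ)) = ((Pr g : ℝ)) := by
          have e1 := Real.exp_log (by exact_mod_cast hn1 : (0:ℝ) < (Pr h : ℝ))
          have e2 := Real.exp_log (by exact_mod_cast hm1 : (0:ℝ) < (Pr g : ℝ))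
          rw [← e1, ← e2, h0]
        exact hpne (by exact_mod_cast this.symm)
      have hcne : c ≠ 0 := by
        rw [hcdef]
        exact mul_ne_zero (Complex.ofReal_ne_zero.mpr hθne) Complex.I_ne_zero
      rw [integral_exp_mul_complex hcne]
      have hnorm1 : ∀ s : ℝ, ‖Complex.exp (c * (s:ℂ))‖ = 1 := by
        intro s
        rw [Complex.norm_exp]
        have : (c * (s:ℂ)).re = 0 := by
          rw [hcdef]
          simp [Complex.mul_re, Complex.mul_im]
        rw [this, Real.exp_zero]
      have hcnorm : ‖c‖ = |θ| := by
        rw [hcdef, norm_mul, Complex.norm_real, Real.norm_eq_abs, Complex.norm_I, mul_one]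
      have hgap : |(Pr g:ℝ) - (Pr h:ℝ)| / x^k ≤ |θ| := by
        rw [hθ]
        exact log_gap7 hm1 hn1 (by exact_mod_cast hpne) (hPrle g hg) (hPrle h hh)
      have habs0 : (0:ℝ) < |(Pr g:ℝ) - (Pr h:ℝ)| := by
        rw [abs_pos, sub_ne_zero]
        exact_mod_cast hpne
      have hbound : ‖(Complex.exp (c * ((2*T:ℝ):ℂ)) - Complex.exp (c * ((T:ℝ):ℂ))) / c‖
          ≤ 2 * x^k / |(Pr g:ℝ) - (Pr h:ℝ)| := by
        rw [norm_div, hcnorm]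
        have h1 : ‖Complex.exp (c * ((2*T:ℝ):ℂ)) - Complex.exp (c * ((T:ℝ):ℂ))‖ ≤ 2 := by
          refine (norm_sub_le _ _).trans ?_
          rw [hnorm1, hnorm1]
          norm_num
        have hθpos : 0 < |θ| := abs_pos.mpr hθne
        have h2 : ‖Complex.exp (c * ((2*T:ℝ):ℂ)) - Complex.exp (c * ((T:ℝ):ℂ))‖ / |θ|
            ≤ 2 / |θ| := by
          gcongr
        refine h2.trans ?_
        have h3 : 2 / |θ| ≤ 2 / (|(Pr g:ℝ) - (Pr h:ℝ)| / x^k) := by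
          gcongr
        refine h3.trans ?_
        rw [div_div_eq_mul_div]
      rw [hBdef]
      simp only [if_neg hpne]
      exact mul_le_mul_of_nonneg_left hbound (mul_nonneg (hunn g) (hunn h))
  -- Claim 3 : inner sum bound
  have claim3 : ∀ g ∈ D, ∑ h ∈ D, B g h ≤ 9 * (k.factorial : ℝ) * T := by
    intro g hg
    set m := Pr g with hmdef
    set f : ℕ → ℝ := fun n => if m = n then T else 2 * x^k / |(m:ℝ) - (n:ℝ)| with hfdef
    have hfnn : ∀ n, 0 ≤ f n := by
      intro n
      rw [hfdef]
      dsimp only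
      split_ifs
      · exact hT0.le
      · positivity
    have hBf : ∀ h, B g h = f (Pr h) := fun h => rfl
    have hcardle : ∀ n, (D.filter fun h => Pr h = n).card ≤ k.factorial := by
      intro n
      exact card_fiber_le7 k P hPprime n
    have himg : D.image Pr ⊆ Finset.Icc 1 Nn := by
      intro n hn
      rw [Finset.mem_image] at hn
      obtain ⟨h, hh, rfl⟩ := hn
      exact Finset.mem_Icc.mpr ⟨hPr1 h hh, hPrNn h hh⟩
    have hmmem : m ∈ Finset.Icc 1 Nn := Finset.mem_Icc.mpr ⟨hPr1 g hg, hPrNn g hg⟩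
    have step1 : ∑ h ∈ D, B g h = ∑ n ∈ D.image Pr, (D.filter fun h => Pr h = n).card • f n := by
      simp only [hBf]
      exact Finset.sum_comp f Pr
    have step2 : ∑ n ∈ D.image Pr, (D.filter fun h => Pr h = n).card • f n
        ≤ (k.factorial : ℝ) * ∑ n ∈ D.image Pr, f n := by
      rw [Finset.mul_sum]
      refine Finset.sum_le_sum fun n hn => ?_
      rw [nsmul_eq_mul]
      exact mul_le_mul_of_nonneg_right (by exact_mod_cast hcardle n) (hfnn n)
    have step3 : ∑ n ∈ D.image Pr, f n ≤ ∑ n ∈ Finset.Icc 1 Nn, f n :=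
      Finset.sum_le_sum_of_subset_of_nonneg himg (fun n _ _ => hfnn n)
    have step4 : ∑ n ∈ Finset.Icc 1 Nn, f n
        = T + ∑ n ∈ (Finset.Icc 1 Nn).erase m, f n := by
      rw [← Finset.add_sum_erase _ f hmmem]
      congr 1
      rw [hfdef]
      simp
    have step5 : ∑ n ∈ (Finset.Icc 1 Nn).erase m, f n
        = 2 * x^k * ∑ n ∈ (Finset.Icc 1 Nn).erase m, (1 / |(m:ℝ) - (n:ℝ)|) := by
      rw [Finset.mul_sum]
      refine Finset.sum_congr rfl fun n hn => ?_
      have hne : n ≠ m := (Finset.mem_erase.mp hn).1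
      rw [hfdef]
      dsimp only
      rw [if_neg (Ne.symm hne)]
      rw [mul_one_div]
    have step6 : ∑ n ∈ (Finset.Icc 1 Nn).erase m, (1 / |(m:ℝ) - (n:ℝ)|)
        ≤ 2 * (1 + Real.log Nn) :=
      sum_inv_abs_le7 Nn m (hPr1 g hg) (hPrNn g hg)
    -- numeric bound
    have hlogNn : Real.log Nn ≤ Real.log T := by
      have h1 : (Nn:ℝ) ≤ T := by
        refine hNnle.trans (hxk.trans ?_)
        exact div_le_self hT0.le hlogT
      exact Real.log_le_log (by exact_mod_cast hNn1) h1
    have hnum : T + 2 * x^k * (2 * (1 + Real.log Nn)) ≤ 9 * T := by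
      have h1 : 1 + Real.log Nn ≤ 2 * Real.log T := by linarith
      have h2 : 2 * x^k * (2 * (1 + Real.log Nn)) ≤ 2 * x^k * (2 * (2 * Real.log T)) := by
        refine mul_le_mul_of_nonneg_left ?_ (by positivity)
        linarith
      have h3 : 2 * x^k * (2 * (2 * Real.log T)) = 8 * (x^k * Real.log T) := by ring
      nlinarith [hxkT]
    have hfac1 : (1:ℝ) ≤ (k.factorial : ℝ) := by
      exact_mod_cast Nat.one_le_iff_ne_zero.mpr k.factorial_ne_zero
    calc ∑ h ∈ D, B g h
        ≤ (k.factorial : ℝ) * ∑ n ∈ D.image Pr, f n := by rw [step1]; exact step2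
      _ ≤ (k.factorial : ℝ) * (T + 2 * x^k * (2 * (1 + Real.log Nn))) := by
          refine mul_le_mul_of_nonneg_left ?_ (by positivity)
          refine step3.trans ?_
          rw [step4, step5]
          have := mul_le_mul_of_nonneg_left step6 (by positivity : (0:ℝ) ≤ 2 * x^k)
          linarith
      _ ≤ (k.factorial : ℝ) * (9 * T) := mul_le_mul_of_nonneg_left hnum (by positivity)
      _ = 9 * (k.factorial : ℝ) * T := by ring
  -- sum of w over D equals S^k
  have hwprod : ∀ g ∈ D, w g = ∏ i, (‖a (g i)‖^2 / ((g i : ℝ))) := by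
    intro g hg
    have hρsq : ρ g ^ 2 = ((Pr g : ℝ))⁻¹ := by
      rw [hρdef]
      dsimp only
      rw [← Real.rpow_natCast ((Pr g:ℝ) ^ (-(1/2) : ℝ)) 2, ← Real.rpow_mul (Nat.cast_nonneg _)]
      norm_num
      rw [Real.rpow_neg_one]
    have hcsq : ‖cc g‖ ^ 2 = ∏ i, ‖a (g i)‖ ^ 2 := by
      rw [hccdef]
      dsimp only
      rw [norm_prod, ← Finset.prod_pow]
    rw [hwdef]
    dsimp only
    rw [mul_pow, hρsq, hcsq]
    rw [Finset.prod_div_distrib, div_eq_mul_inv]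
    congr 1
    rw [hPrdef]
    dsimp only
    rw [Nat.cast_prod]
  have hSk : (∑ p ∈ P, ‖a p‖^2 / (p:ℝ)) ^ k = ∑ g ∈ D, w g := by
    calc (∑ p ∈ P, ‖a p‖^2 / (p:ℝ)) ^ k
        = ∏ _i : Fin k, (∑ p ∈ P, ‖a p‖^2 / (p:ℝ)) := by
          rw [Finset.prod_const, Finset.card_univ, Fintype.card_fin]
      _ = ∑ g ∈ D, ∏ i, (‖a (g i)‖^2 / ((g i : ℝ))) := Finset.prod_univ_sum _ _
      _ = ∑ g ∈ D, w g := Finset.sum_congr rfl fun g hg => (hwprod g hg).symm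
  -- the main chain
  have humu : ∀ g h : Fin k → ℕ, u g * u h ≤ (w g + w h) / 2 := by
    intro g h
    rw [hwdef]
    dsimp only
    nlinarith [sq_nonneg (u g - u h)]
  have hswap : ∑ g ∈ D, ∑ h ∈ D, w h * B g h = ∑ g ∈ D, ∑ h ∈ D, w g * B g h := by
    rw [Finset.sum_comm]
    refine Finset.sum_congr rfl fun g _ => Finset.sum_congr rfl fun h _ => ?_
    rw [hBsymm]
  calc (∫ t in Set.Ioc T (2 * T),
          ‖∑ p ∈ P, a p * (p : ℂ) ^ (-(((1 / 2 : ℝ) : ℂ) + (t : ℝ) * Complex.I))‖ ^ (2 * k))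
      = ∫ t in Set.Ioc T (2*T), ∑ g ∈ D, ∑ h ∈ D, (E g h t).re :=
        MeasureTheory.integral_congr_ae (Filter.Eventually.of_forall fun t => claim1 t)
    _ = ∑ g ∈ D, ∑ h ∈ D, ∫ t in Set.Ioc T (2*T), (E g h t).re := by
        rw [MeasureTheory.integral_finset_sum _
          (fun g _ => MeasureTheory.integrable_finset_sum _ (fun h _ => hEreint g h))]
        exact Finset.sum_congr rfl fun g _ =>
          MeasureTheory.integral_finset_sum _ (fun h _ => hEreint g h)
    _ = ∑ g ∈ D, ∑ h ∈ D, (∫ t in Set.Ioc T (2*T), E g h t).re := by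
        refine Finset.sum_congr rfl fun g _ => Finset.sum_congr rfl fun h _ => ?_
        exact integral_re (hEint g h)
    _ ≤ ∑ g ∈ D, ∑ h ∈ D, u g * u h * B g h :=
        Finset.sum_le_sum fun g hg => Finset.sum_le_sum fun h hh => claim2 g hg h hh
    _ ≤ ∑ g ∈ D, ∑ h ∈ D, ((w g * B g h + w h * B g h) / 2) := by
        refine Finset.sum_le_sum fun g _ => Finset.sum_le_sum fun h _ => ?_
        have h1 := mul_le_mul_of_nonneg_right (humu g h) (hBnn g h)
        calc u g * u h * B g h ≤ (w g + w h) / 2 * B g h := h1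
          _ = (w g * B g h + w h * B g h) / 2 := by ring
    _ = ∑ g ∈ D, ∑ h ∈ D, w g * B g h := by
        have e1 : ∑ g ∈ D, ∑ h ∈ D, ((w g * B g h + w h * B g h)/2)
            = (∑ g ∈ D, ∑ h ∈ D, w g * B g h)/2 + (∑ g ∈ D, ∑ h ∈ D, w h * B g h)/2 := by
          rw [Finset.sum_div, Finset.sum_div, ← Finset.sum_add_distrib]
          refine Finset.sum_congr rfl fun g _ => ?_
          rw [Finset.sum_div, Finset.sum_div, ← Finset.sum_add_distrib]
          refine Finset.sum_congr rfl fun h _ => ?_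
          ring
        rw [e1, hswap]
        ring
    _ = ∑ g ∈ D, w g * ∑ h ∈ D, B g h := by
        refine Finset.sum_congr rfl fun g _ => ?_
        rw [Finset.mul_sum]
    _ ≤ ∑ g ∈ D, w g * (9 * (k.factorial:ℝ) * T) :=
        Finset.sum_le_sum fun g hg => mul_le_mul_of_nonneg_left (claim3 g hg) (hwnn g)
    _ = 9 * (k.factorial:ℝ) * T * ∑ g ∈ D, w g := by
        rw [← Finset.sum_mul]
        ring
    _ = 9 * (k.factorial:ℝ) * T * (∑ p ∈ P, ‖a p‖^2 / (p:ℝ)) ^ k := by rw [hSk]
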